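/- Let (x,y,z) and (r,s,t) be bases of the space of linear forms in ℂ[X,Y,Z], and let Φ = [[−y, x, 0], [−z, 0, x], [0, −z, y]] and Ψ = [[−s, −t, 0], [r, 0, −t], [0, r, s]]. If γ is a 3×3 complex (constant) matrix satisfying Ψ·γ·Φ = 0 as matrices over ℂ[X,Y,Z], then γ = 0. (This is the central step in the computation showing that the solution space K(φ₁₁,φ₂₂) has dimension 4 when the maximal minors of φ₁₁ and of φ₂₂ have common linear factors.) -/

import Mathlib

open MvPolynomial
open Matrix

abbrev R3 := MvPolynomial (Fin 3) ℂ

lemma deg1_single {m : Fin 3 →₀ ℕ} (hm : m.degree = 1) : ∃ i, m = Finsupp.single i 1 := by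
  have h : ∑ i : Fin 3, m i = 1 := by
    rw [← hm, Finsupp.degree]
    exact (Finset.sum_subset (Finset.subset_univ _) (by
      intro x _ hx
      simpa using (Finsupp.notMem_support_iff.mp hx))).symm
  rw [Fin.sum_univ_three] at h
  have : (m 0 = 1 ∧ m 1 = 0 ∧ m 2 = 0) ∨ (m 0 = 0 ∧ m 1 = 1 ∧ m 2 = 0) ∨
      (m 0 = 0 ∧ m 1 = 0 ∧ m 2 = 1) := by omega
  rcases this with ⟨a,b,c⟩|⟨a,b,c⟩|⟨a,b,c⟩
  · exact ⟨0, by ext j; fin_cases j <;> simp [Finsupp.single_apply, a, b, c]⟩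
  · exact ⟨1, by ext j; fin_cases j <;> simp [Finsupp.single_apply, a, b, c]⟩
  · exact ⟨2, by ext j; fin_cases j <;> simp [Finsupp.single_apply, a, b, c]⟩

lemma hom1_eq (p : R3) (hp : p.IsHomogeneous 1) :
    p = ∑ i : Fin 3, C (coeff (Finsupp.single i 1) p) * X i := by
  ext m
  rw [coeff_sum]
  simp only [coeff_C_mul, coeff_X']
  by_cases hm : m.degree = 1
  · obtain ⟨i, rfl⟩ := deg1_single hm
    rw [Finset.sum_eq_single i]
    · simp
    · intro j _ hj
      rw [if_neg, mul_zero]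
      intro hc
      exact hj (by simpa using (Finsupp.single_left_injective one_ne_zero hc))
    · simp
  · rw [hp.coeff_eq_zero hm]
    apply (Finset.sum_eq_zero _).symm
    intro i _
    rw [if_neg, mul_zero]
    rintro rfl
    exact hm (by simp [Finsupp.degree_single])

lemma collin (b v : Fin 3 → ℂ) (h1 : b 1 * v 0 + b 2 * v 1 = 0)
    (h2 : b 0 * v 0 - b 2 * v 2 = 0) (h3 : b 0 * v 1 + b 1 * v 2 = 0)
    (hv : v ≠ 0) : ∃ μ : ℂ, b = μ • ![v 2, -(v 1), v 0] := by
  have hv' : v 0 ≠ 0 ∨ v 1 ≠ 0 ∨ v 2 ≠ 0 := by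
    by_contra h
    push_neg at h
    exact hv (funext fun i => by fin_cases i <;> simp [h.1, h.2.1, h.2.2])
  rcases hv' with h0 | h1' | h2'
  · refine ⟨b 2 / v 0, funext fun i => ?_⟩
    fin_cases i <;> simp <;> field_simp <;> first | linear_combination h1 | linear_combination h2 | linear_combination h3 | linear_combination -h1 | linear_combination -h2 | linear_combination -h3 | linear_combination -h2 - h3 | linear_combination h2 + h3 | linear_combination h1 + h2 | linear_combination h1 - h2 | linear_combination h1 + h3 | linear_combination h1 - h3
  · refine ⟨-(b 1) / v 1, funext fun i => ?_⟩
    fin_cases i <;> simp <;> field_simp <;> first | linear_combination h1 | linear_combination h2 | linear_combination h3 | linear_combination -h1 | linear_combination -h2 | linear_combination -h3 | linear_combination -h2 - h3 | linear_combination h2 + h3 | linear_combination h1 + h2 | linear_combination h1 - h2 | linear_combination h1 + h3 | linear_combination h1 - h3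
  · refine ⟨b 0 / v 2, funext fun i => ?_⟩
    fin_cases i <;> simp <;> field_simp <;> first | linear_combination h1 | linear_combination h2 | linear_combination h3 | linear_combination -h1 | linear_combination -h2 | linear_combination -h3 | linear_combination -h2 - h3 | linear_combination h2 + h3 | linear_combination h1 + h2 | linear_combination h1 - h2 | linear_combination h1 + h3 | linear_combination h1 - h3

lemma ker2 (b b' v : Fin 3 → ℂ)
    (h1 : b 1 * v 0 + b 2 * v 1 = 0) (h2 : b 0 * v 0 - b 2 * v 2 = 0)
    (h3 : b 0 * v 1 + b 1 * v 2 = 0)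
    (h1' : b' 1 * v 0 + b' 2 * v 1 = 0) (h2' : b' 0 * v 0 - b' 2 * v 2 = 0)
    (h3' : b' 0 * v 1 + b' 1 * v 2 = 0)
    (hprop : ∀ c c' : ℂ, c • b = c' • b' → c = 0 ∧ c' = 0) : v = 0 := by
  by_contra hv
  obtain ⟨μ, hb⟩ := collin b v h1 h2 h3 hv
  obtain ⟨μ', hb'⟩ := collin b' v h1' h2' h3' hv
  have key : μ' • b = μ • b' := by rw [hb, hb', smul_smul, smul_smul, mul_comm]
  obtain ⟨hμ', hμ⟩ := hprop μ' μ key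
  have hb0 : b = 0 := by rw [hb, hμ, zero_smul]
  obtain ⟨h10, -⟩ := hprop 1 0 (by rw [hb0, smul_zero, zero_smul])
  exact one_ne_zero h10

lemma rows_unit (v : Fin 3 → R3) (hv : ∀ i, (v i).IsHomogeneous 1)
    (hI : LinearIndependent ℂ v) :
    IsUnit (Matrix.of fun i j => coeff (Finsupp.single j 1) (v i)) := by
  set M : Matrix (Fin 3) (Fin 3) ℂ := Matrix.of fun i j => coeff (Finsupp.single j 1) (v i)
    with hM
  rw [← Matrix.vecMul_injective_iff_isUnit]
  have key : ∀ d : Fin 3 → ℂ, Matrix.vecMul d M = 0 → d = 0 := by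
    intro d hd
    set q : R3 := ∑ i : Fin 3, d i • v i with hq
    have hqh : q.IsHomogeneous 1 := by
      rw [← mem_homogeneousSubmodule]
      exact Submodule.sum_mem _ fun i _ =>
        Submodule.smul_mem _ _ ((mem_homogeneousSubmodule _ _).mpr (hv i))
    have hcq : ∀ j, coeff (Finsupp.single j 1) q = 0 := by
      intro j
      have h := congrFun hd j
      simpa [hq, Matrix.vecMul, dotProduct, hM, coeff_sum, coeff_smul,
        smul_eq_mul] using h
    have hq0 : q = 0 := by
      rw [hom1_eq q hqh]
      exact Finset.sum_eq_zero fun j _ => by rw [hcq j, map_zero, zero_mul]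
    have := Fintype.linearIndependent_iff.mp hI d (by rw [← hq, hq0])
    exact funext this
  intro u u' huu'
  have : (u - u') = 0 := by
    apply key
    simp only at huu'
    rw [Matrix.sub_vecMul, huu', sub_self]
  funext i
  have := congrFun this i
  simpa [sub_eq_zero] using this

/-- Numeric Koszul matrix over ℂ. -/
def PsiC (b : Fin 3 → ℂ) : Matrix (Fin 3) (Fin 3) ℂ :=
  !![-(b 1), -(b 2), 0; b 0, 0, -(b 2); 0, b 0, b 1]

/-- Numeric Koszul matrix over ℂ. -/
def PhiC (a : Fin 3 → ℂ) : Matrix (Fin 3) (Fin 3) ℂ :=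
  !![-(a 1), a 0, 0; -(a 2), 0, a 0; 0, -(a 2), a 1]

lemma kill (b b' : Fin 3 → ℂ) (γ : Matrix (Fin 3) (Fin 3) ℂ) (m : Fin 3)
    (h : ∀ i, (PsiC b * γ) i m = 0) (h' : ∀ i, (PsiC b' * γ) i m = 0)
    (hprop : ∀ c c' : ℂ, c • b = c' • b' → c = 0 ∧ c' = 0) :
    ∀ i, γ i m = 0 := by
  have h0 := h 0; have h1 := h 1; have h2 := h 2
  have h0' := h' 0; have h1' := h' 1; have h2' := h' 2
  simp only [PsiC, Matrix.mul_apply, Fin.sum_univ_three, Matrix.cons_val', Matrix.cons_val_zero,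
    Matrix.cons_val_one, Matrix.head_cons, Matrix.empty_val', Matrix.cons_val_fin_one,
    Matrix.head_fin_const, Matrix.of_apply, Matrix.cons_val_two, Matrix.tail_cons] at h0 h1 h2 h0' h1' h2'
  have hv := ker2 b b' (fun k => γ k m)
    (by linear_combination -h0)
    (by linear_combination h1)
    (by linear_combination h2)
    (by linear_combination -h0')
    (by linear_combination h1')
    (by linear_combination h2')
    hprop
  intro i
  exact congrFun hv i


lemma kcol' (B Φ : Matrix (Fin 3) (Fin 3) ℂ) (m k : Fin 3) (e : ℂ) (hne : e ≠ 0)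
    (he : ∀ i, Φ i k = if i = m then e else 0) (h : ∀ i, (B * Φ) i k = 0) :
    ∀ i, B i m = 0 := by
  intro i
  have h' := h i
  rw [Matrix.mul_apply, Fin.sum_univ_three, he 0, he 1, he 2] at h'
  fin_cases m <;> simp at h' <;>
    first
      | exact (mul_eq_zero.mp h').resolve_right hne
      | exact h'
      | exact (mul_eq_zero.mp h').resolve_left hne
      | tauto

/-- The Koszul matrix `Φ` associated to a triple of linear forms `(x,y,z)`. -/
noncomputable def PhiM (x y z : R3) : Matrix (Fin 3) (Fin 3) R3 :=
  !![-y, x, 0; -z, 0, x; 0, -z, y]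

/-- The Koszul matrix `Ψ` associated to a triple of linear forms `(r,s,t)`. -/
noncomputable def PsiM (r s t : R3) : Matrix (Fin 3) (Fin 3) R3 :=
  !![-s, -t, 0; r, 0, -t; 0, r, s]

/-- Let `(x,y,z)` and `(r,s,t)` be bases of the space of linear forms in `ℂ[X,Y,Z]`,
and `Φ`, `Ψ` the associated Koszul matrices.  If a constant 3×3 matrix `γ` satisfies
`Ψ·γ·Φ = 0`, then `γ = 0`. -/
theorem stmt6 (x y z r s t : R3)
    (hx : x.IsHomogeneous 1) (hy : y.IsHomogeneous 1) (hz : z.IsHomogeneous 1)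
    (hr : r.IsHomogeneous 1) (hs : s.IsHomogeneous 1) (ht : t.IsHomogeneous 1)
    (hI₁ : LinearIndependent ℂ ![x, y, z]) (hI₂ : LinearIndependent ℂ ![r, s, t])
    (hS₁ : ∀ p : R3, p.IsHomogeneous 1 → p ∈ Submodule.span ℂ ({x, y, z} : Set R3))
    (hS₂ : ∀ p : R3, p.IsHomogeneous 1 → p ∈ Submodule.span ℂ ({r, s, t} : Set R3))
    (γ : Matrix (Fin 3) (Fin 3) ℂ)
    (hγ : PsiM r s t * γ.map (fun c => (C c : R3)) * PhiM x y z = 0) :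
    γ = 0 := by
    classical
  have heval : ∀ (q : R3), q.IsHomogeneous 1 → ∀ p : Fin 3 → ℂ,
      eval p q = ∑ j : Fin 3, coeff (Finsupp.single j 1) q * p j := by
    intro q hq p
    conv_lhs => rw [hom1_eq q hq]
    simp
  set Vm : Matrix (Fin 3) (Fin 3) ℂ :=
    Matrix.of fun i j => coeff (Finsupp.single j 1) (![x, y, z] i) with hVm
  set Wm : Matrix (Fin 3) (Fin 3) ℂ :=
    Matrix.of fun i j => coeff (Finsupp.single j 1) (![r, s, t] i) with hWm
  have hVu : IsUnit Vm := rows_unit _ (fun i => by fin_cases i <;> assumption) hI₁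
  have hWu : IsUnit Wm := rows_unit _ (fun i => by fin_cases i <;> assumption) hI₂
  haveI := hVu.invertible
  haveI := hWu.invertible
  set pj : Fin 3 → (Fin 3 → ℂ) := fun j => Vm⁻¹ *ᵥ Pi.single j 1 with hpj
  have hVp : ∀ j, Vm *ᵥ pj j = Pi.single j 1 := by
    intro j
    rw [hpj]
    dsimp only
    rw [Matrix.mulVec_mulVec, Matrix.mul_nonsing_inv _ ((Matrix.isUnit_iff_isUnit_det _).mp hVu),
      Matrix.one_mulVec]
  set bj : Fin 3 → (Fin 3 → ℂ) := fun j => Wm *ᵥ pj j with hbj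
  -- evaluation of our linear forms at a point
  have hex : ∀ p : Fin 3 → ℂ, eval p x = (Vm *ᵥ p) 0 := by
    intro p; rw [heval x hx p]; simp [hVm, Matrix.mulVec, dotProduct]
  have hey : ∀ p : Fin 3 → ℂ, eval p y = (Vm *ᵥ p) 1 := by
    intro p; rw [heval y hy p]; simp [hVm, Matrix.mulVec, dotProduct]
  have hez : ∀ p : Fin 3 → ℂ, eval p z = (Vm *ᵥ p) 2 := by
    intro p; rw [heval z hz p]; simp [hVm, Matrix.mulVec, dotProduct]
  have her : ∀ p : Fin 3 → ℂ, eval p r = (Wm *ᵥ p) 0 := by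
    intro p; rw [heval r hr p]; simp [hWm, Matrix.mulVec, dotProduct]
  have hes : ∀ p : Fin 3 → ℂ, eval p s = (Wm *ᵥ p) 1 := by
    intro p; rw [heval s hs p]; simp [hWm, Matrix.mulVec, dotProduct]
  have het : ∀ p : Fin 3 → ℂ, eval p t = (Wm *ᵥ p) 2 := by
    intro p; rw [heval t ht p]; simp [hWm, Matrix.mulVec, dotProduct]
  -- the evaluated matrix identity
  have hmap : ∀ p : Fin 3 → ℂ, PsiC (Wm *ᵥ p) * γ * PhiC (Vm *ᵥ p) = 0 := by
    intro p
    have h0 : ((PsiM r s t * γ.map (fun c => (C c : R3)) * PhiM x y z).map (eval p)) =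
        (0 : Matrix (Fin 3) (Fin 3) R3).map (eval p) := by rw [hγ]
    rw [Matrix.map_mul, Matrix.map_mul] at h0
    have e1 : (γ.map (fun c => (C c : R3))).map (eval p) = γ := by
      rw [Matrix.map_map]
      ext i k
      simp [Matrix.map_apply]
    have e2 : (PsiM r s t).map (eval p) = PsiC (Wm *ᵥ p) := by
      ext i k
      fin_cases i <;> fin_cases k <;>
        simp [PsiM, PsiC, Matrix.map_apply, her p, hes p, het p]
    have e3 : (PhiM x y z).map (eval p) = PhiC (Vm *ᵥ p) := by
      ext i k
      fin_cases i <;> fin_cases k <;>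
        simp [PhiM, PhiC, Matrix.map_apply, hex p, hey p, hez p]
    rw [e1, e2, e3] at h0
    simpa using h0
  -- the identity at the three special points
  have hj : ∀ j : Fin 3, PsiC (bj j) * γ * PhiC (Pi.single j 1) = 0 := by
    intro j
    have := hmap (pj j)
    rwa [hVp j] at this
  -- proportionality
  have hprop : ∀ j k : Fin 3, j ≠ k → ∀ c c' : ℂ, c • bj j = c' • bj k → c = 0 ∧ c' = 0 := by
    intro j k hjk c c' h
    have h2 : Wm *ᵥ (c • pj j) = Wm *ᵥ (c' • pj k) := by
      rw [Matrix.mulVec_smul, Matrix.mulVec_smul]; exact h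
    have h3 : c • pj j = c' • pj k := Matrix.mulVec_injective_of_invertible Wm h2
    have h4 : c • (Pi.single j 1 : Fin 3 → ℂ) = c' • (Pi.single k 1 : Fin 3 → ℂ) := by
      calc c • (Pi.single j 1 : Fin 3 → ℂ) = Vm *ᵥ (c • pj j) := by
            rw [Matrix.mulVec_smul, hVp]
        _ = Vm *ᵥ (c' • pj k) := by rw [h3]
        _ = c' • (Pi.single k 1 : Fin 3 → ℂ) := by rw [Matrix.mulVec_smul, hVp]
    constructor
    · have := congrFun h4 j
      simpa [Pi.single_apply, hjk, Ne.symm hjk] using this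
    · have := congrFun h4 k
      simpa [Pi.single_apply, hjk, Ne.symm hjk] using this.symm
  -- extract per-column kill hypotheses
  have key : ∀ (j : Fin 3) (i k : Fin 3), (PsiC (bj j) * γ * PhiC (Pi.single j 1)) i k = 0 := by
    intro j i k
    rw [hj j]
    rfl
  have k0 : ∀ i, γ i 0 = 0 :=
    kill (bj 0) (bj 1) γ 0
      (kcol' _ _ 0 1 1 one_ne_zero
        (fun i => by fin_cases i <;> simp [PhiC, Pi.single_apply, Matrix.vecHead, Matrix.vecTail]) (fun i => key 0 i 1))
      (kcol' _ _ 0 0 (-1) (by norm_num)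
        (fun i => by fin_cases i <;> simp [PhiC, Pi.single_apply, Matrix.vecHead, Matrix.vecTail]) (fun i => key 1 i 0))
      (hprop 0 1 (by decide))
  have k1 : ∀ i, γ i 1 = 0 :=
    kill (bj 0) (bj 2) γ 1
      (kcol' _ _ 1 2 1 one_ne_zero
        (fun i => by fin_cases i <;> simp [PhiC, Pi.single_apply, Matrix.vecHead, Matrix.vecTail]) (fun i => key 0 i 2))
      (kcol' _ _ 1 0 (-1) (by norm_num)
        (fun i => by fin_cases i <;> simp [PhiC, Pi.single_apply, Matrix.vecHead, Matrix.vecTail]) (fun i => key 2 i 0))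
      (hprop 0 2 (by decide))
  have k2 : ∀ i, γ i 2 = 0 :=
    kill (bj 1) (bj 2) γ 2
      (kcol' _ _ 2 2 1 one_ne_zero
        (fun i => by fin_cases i <;> simp [PhiC, Pi.single_apply, Matrix.vecHead, Matrix.vecTail]) (fun i => key 1 i 2))
      (kcol' _ _ 2 1 (-1) (by norm_num)
        (fun i => by fin_cases i <;> simp [PhiC, Pi.single_apply, Matrix.vecHead, Matrix.vecTail]) (fun i => key 2 i 1))
      (hprop 1 2 (by decide))
  ext i m
  fin_cases m
  · exact k0 i
  · exact k1 i
  · exact k2 i
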